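/- Every perfect matching M on a set P of n ≥ 4 points in the plane in convex position (and in general position) can be transformed, by at most one flip, into a perfect matching that contains a boundary edge, i.e., an edge {p,q} such that all points of P \ {p,q} lie strictly on one side of the line through p and q. -/

import Mathlib

open EuclideanGeometry Real

noncomputable section

/-- Points of the Euclidean plane. -/
abbrev Pt : Type := EuclideanSpace ℝ (Fin 2)

/-- Two closed segments `ab` and `cd` on four distinct points *cross* if their open
segments have a common point. -/
def SegCross (a b c d : Pt) : Prop :=
  a ≠ b ∧ a ≠ c ∧ a ≠ d ∧ b ≠ c ∧ b ≠ d ∧ c ≠ d ∧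
    (openSegment ℝ a b ∩ openSegment ℝ c d).Nonempty

/-- `M` is a perfect matching on the point set `P`: a set of non-degenerate unordered
pairs (edges) of points of `P` such that every point of `P` lies in exactly one edge. -/
def IsPM (P : Finset Pt) (M : Set (Sym2 Pt)) : Prop :=
  (∀ e ∈ M, ¬ e.IsDiag) ∧
  (∀ e ∈ M, ∀ p ∈ e, p ∈ P) ∧
  (∀ p ∈ P, ∃! e, e ∈ M ∧ p ∈ e)

/-- Two unordered edges cross. -/
def EdgeCross (e f : Sym2 Pt) : Prop :=
  ∃ a b c d : Pt, e = s(a, b) ∧ f = s(c, d) ∧ SegCross a b c d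

/-- A matching is plane if no two of its edges cross. -/
def PlaneM (M : Set (Sym2 Pt)) : Prop :=
  ∀ e ∈ M, ∀ f ∈ M, ¬ EdgeCross e f

/-- `M'` is obtained from `M` by a single flip: two crossing edges `{a,b}`, `{c,d}`
are replaced by `{a,c}`, `{b,d}` or by `{a,d}`, `{b,c}`. -/
def Flip (M M' : Set (Sym2 Pt)) : Prop :=
  ∃ a b c d : Pt, s(a, b) ∈ M ∧ s(c, d) ∈ M ∧ SegCross a b c d ∧
    (M' = (M \ {s(a, b), s(c, d)}) ∪ {s(a, c), s(b, d)} ∨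
     M' = (M \ {s(a, b), s(c, d)}) ∪ {s(a, d), s(b, c)})

/-- `M` can be transformed into a plane matching by at most `k` flips. -/
def FlipsToPlane (M : Set (Sym2 Pt)) (k : ℕ) : Prop :=
  ∃ (j : ℕ) (g : ℕ → Set (Sym2 Pt)), j ≤ k ∧ g 0 = M ∧
    (∀ i < j, Flip (g i) (g (i + 1))) ∧ PlaneM (g j)

/-- No three distinct points of `P` are collinear. -/
def GenPos (P : Set Pt) : Prop :=
  ∀ p ∈ P, ∀ q ∈ P, ∀ r ∈ P, p ≠ q → p ≠ r → q ≠ r →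
    ¬ Collinear ℝ ({p, q, r} : Set Pt)

/-- `P` is in convex position: no point lies in the convex hull of the others. -/
def ConvexPos (P : Set Pt) : Prop :=
  ∀ p ∈ P, p ∉ convexHull ℝ (P \ {p})

/-- `{p, q}` is a boundary edge of `P`: all other points of `P` lie strictly on one
side of the line through `p` and `q`. -/
def BoundaryEdge (P : Set Pt) (p q : Pt) : Prop :=
  p ≠ q ∧ ∀ x ∈ P \ {p, q}, ∀ y ∈ P \ {p, q},
    (affineSpan ℝ ({p, q} : Set Pt)).SSameSide x y


def det3 (p q r : Pt) : ℝ := (q 0 - p 0) * (r 1 - p 1) - (q 1 - p 1) * (r 0 - p 0)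

lemma pt_ext {x y : Pt} (h0 : x 0 = y 0) (h1 : x 1 = y 1) : x = y := by
  ext i; fin_cases i <;> assumption

lemma pt_ne_iff {x y : Pt} : x ≠ y ↔ x 0 ≠ y 0 ∨ x 1 ≠ y 1 := by
  constructor
  · intro h
    by_contra hc
    push_neg at hc
    exact h (pt_ext hc.1 hc.2)
  · rintro (h | h) rfl <;> simp at h

lemma det3_self_left (p r : Pt) : det3 p p r = 0 := by simp [det3]
lemma det3_self_mid (p r : Pt) : det3 p r p = 0 := by simp [det3]
lemma det3_self_right (p q : Pt) : det3 p q q = 0 := by simp [det3]; ring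
lemma det3_swap23 (p q r : Pt) : det3 p r q = - det3 p q r := by simp [det3]; ring
lemma det3_cyc (p q r : Pt) : det3 q r p = det3 p q r := by simp [det3]; ring

lemma det3_swap12 (p q r : Pt) : det3 q p r = - det3 p q r := by simp [det3]; ring

lemma cocycle (a b c d : Pt) : det3 b c d - det3 a c d + det3 a b d - det3 a b c = 0 := by
  simp [det3]; ring

lemma gp_identity (a b s x y : Pt) :
    det3 a b s * det3 a x y - det3 a b x * det3 a s y + det3 a b y * det3 a s x = 0 := by
  simp [det3]; ring

lemma bary_identity (a b c d : Pt) :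
    det3 a b c • d = det3 b c d • a - det3 a c d • b + det3 a b d • c := by
  ext i; fin_cases i <;> (simp [det3]; ring)

/-- det = 0 and p ≠ q gives r = t•(q-p)+p -/
lemma exists_param_of_det3 {p q r : Pt} (hpq : p ≠ q) (h : det3 p q r = 0) :
    ∃ t : ℝ, r = t • (q - p) + p := by
  have h' : (q 0 - p 0) * (r 1 - p 1) = (q 1 - p 1) * (r 0 - p 0) := by
    simp [det3] at h; linarith
  by_cases h0 : q 0 - p 0 = 0
  · have h1 : q 1 - p 1 ≠ 0 := by
      rcases pt_ne_iff.1 hpq with hx | hx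
      · intro _; apply hx; by_contra hco; exact hx (by linarith)
      · intro hc; exact hx (by linarith)
    refine ⟨(r 1 - p 1) / (q 1 - p 1), ?_⟩
    have hr0 : r 0 - p 0 = 0 := by
      rw [h0] at h'
      rcases mul_eq_zero.1 (by linarith : (q 1 - p 1) * (r 0 - p 0) = 0) with h'' | h''
      · exact absurd h'' h1
      · exact h''
    apply pt_ext
    · simp
      have hr : r 0 = p 0 := by linarith
      rw [hr, h0]; ring
    · simp; field_simp; ring
  · refine ⟨(r 0 - p 0) / (q 0 - p 0), ?_⟩
    apply pt_ext
    · simp; field_simp; ring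
    · simp; field_simp; linear_combination h'

lemma collinear_of_det3 {p q r : Pt} (hpq : p ≠ q) (h : det3 p q r = 0) :
    Collinear ℝ ({p, q, r} : Set Pt) := by
  obtain ⟨t, ht⟩ := exists_param_of_det3 hpq h
  rw [collinear_iff_of_mem (Set.mem_insert p _)]
  refine ⟨q - p, ?_⟩
  rintro x (rfl | rfl | rfl)
  · exact ⟨0, by simp⟩
  · exact ⟨1, by simp⟩
  · exact ⟨t, by rw [ht]; simp⟩

lemma det3_eq_zero_of_collinear {p q r : Pt} (h : Collinear ℝ ({p, q, r} : Set Pt)) :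
    det3 p q r = 0 := by
  rw [collinear_iff_of_mem (Set.mem_insert p _)] at h
  obtain ⟨v, hv⟩ := h
  obtain ⟨t1, ht1⟩ := hv q (by simp)
  obtain ⟨t2, ht2⟩ := hv r (by simp)
  subst ht1 ht2
  simp [det3]; ring

/-- Strict same side from positive determinants. -/
lemma ssameside_of_det3 {p q x y : Pt} (hpq : p ≠ q)
    (hx : 0 < det3 p q x) (hy : 0 < det3 p q y) :
    (affineSpan ℝ ({p, q} : Set Pt)).SSameSide x y := by
  set v0 : ℝ := q 0 - p 0 with hv0
  set v1 : ℝ := q 1 - p 1 with hv1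
  have hvsq : 0 < v0 ^ 2 + v1 ^ 2 := by
    rcases pt_ne_iff.1 hpq with h | h
    · have : v0 ≠ 0 := fun hc => h (by simp [hv0] at hc; linarith)
      positivity
    · have : v1 ≠ 0 := fun hc => h (by simp [hv1] at hc; linarith)
      positivity
  -- n = (-v1, v0)
  set n : Pt := (EuclideanSpace.equiv (Fin 2) ℝ).symm ![-v1, v0] with hn
  have hn0 : n 0 = -v1 := rfl
  have hn1 : n 1 = v0 := rfl
  have key : ∀ z : Pt, 0 < det3 p q z →
      ∃ p' ∈ affineSpan ℝ ({p, q} : Set Pt),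
        z -ᵥ p' = (det3 p q z / (v0 ^ 2 + v1 ^ 2)) • n ∧ z ∉ affineSpan ℝ ({p, q} : Set Pt) := by
    intro z hz
    set a : ℝ := ((z 0 - p 0) * v0 + (z 1 - p 1) * v1) / (v0 ^ 2 + v1 ^ 2) with ha
    refine ⟨a • (q -ᵥ p) +ᵥ p, AffineSubspace.smul_vsub_vadd_mem _ a
      (subset_affineSpan ℝ _ (by simp)) (subset_affineSpan ℝ _ (by simp))
      (subset_affineSpan ℝ _ (by simp)), ?_, ?_⟩
    · apply pt_ext
      · show z 0 - (a * (q 0 - p 0) + p 0) = det3 p q z / (v0 ^ 2 + v1 ^ 2) * n 0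
        rw [hn0, ha, ← hv0]
        field_simp
        simp [det3, ← hv0, ← hv1]; ring
      · show z 1 - (a * (q 1 - p 1) + p 1) = det3 p q z / (v0 ^ 2 + v1 ^ 2) * n 1
        rw [hn1, ha, ← hv1]
        field_simp
        simp [det3, ← hv0, ← hv1]; ring
    · intro hmem
      have hcol := collinear_insert_of_mem_affineSpan_pair hmem
      have : det3 p q z = 0 := by
        apply det3_eq_zero_of_collinear
        exact hcol.subset (by intro w hw; simp at hw ⊢; tauto)
      linarith
  obtain ⟨p1, hp1, hx1, hxn⟩ := key x hx
  obtain ⟨p2, hp2, hy1, hyn⟩ := key y hy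
  refine ⟨⟨p1, hp1, p2, hp2, ?_⟩, hxn, hyn⟩
  rw [hx1, hy1]
  refine Or.inr (Or.inr ⟨det3 p q y / (v0 ^ 2 + v1 ^ 2), det3 p q x / (v0 ^ 2 + v1 ^ 2),
    by positivity, by positivity, ?_⟩)
  rw [smul_smul, smul_smul, mul_comm]

/-- Crossing from opposite determinant signs. -/
lemma segcross_of_det3 {a b c d : Pt} (h1 : det3 a b c * det3 a b d < 0)
    (h2 : det3 c d a * det3 c d b < 0)
    (hab : a ≠ b) (hac : a ≠ c) (had : a ≠ d) (hbc : b ≠ c) (hbd : b ≠ d) (hcd : c ≠ d) :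
    SegCross a b c d := by
  refine ⟨hab, hac, had, hbc, hbd, hcd, ?_⟩
  set t : ℝ := det3 c d a / (det3 c d a - det3 c d b) with hT
  set u : ℝ := det3 a b c / (det3 a b c - det3 a b d) with hU
  have hmem : ∀ x y : ℝ, x * y < 0 → 0 < x / (x - y) ∧ x / (x - y) < 1 := by
    intro x y h
    rcases mul_neg_iff.1 h with ⟨h3, h4⟩ | ⟨h3, h4⟩
    · have hd : 0 < x - y := by linarith
      exact ⟨div_pos h3 hd, (div_lt_one hd).2 (by linarith)⟩
    · have hd : x - y < 0 := by linarith
      exact ⟨div_pos_of_neg_of_neg h3 hd, (div_lt_one_of_neg hd).2 (by linarith)⟩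
  have hden1 : det3 a b c - det3 a b d ≠ 0 := by
    intro hc
    have hy : det3 a b d = det3 a b c := by linarith
    rw [hy] at h1; nlinarith [mul_self_nonneg (det3 a b c)]
  have hden2 : det3 c d a - det3 c d b ≠ 0 := by
    intro hc
    have hy : det3 c d b = det3 c d a := by linarith
    rw [hy] at h2; nlinarith [mul_self_nonneg (det3 c d a)]
  obtain ⟨hu0, hu1⟩ := hmem _ _ h1
  obtain ⟨ht0, ht1⟩ := hmem _ _ h2
  rw [← hU] at hu0 hu1
  rw [← hT] at ht0 ht1
  refine ⟨(1 - t) • a + t • b, ⟨1 - t, t, by linarith, ht0, by ring, rfl⟩, 1 - u, u, by linarith, hu0, by ring, ?_⟩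
  -- (1-u) • c + u • d = (1-t) • a + t • b
  apply pt_ext <;> simp [hT, hU] <;> field_simp <;> simp [det3] <;> ring


lemma notInTriangle {P : Set Pt} (hcv : ConvexPos P) {p q r w : Pt}
    (hp : p ∈ P) (hq : q ∈ P) (hr : r ∈ P) (hw : w ∈ P)
    (hwp : p ≠ w) (hwq : q ≠ w) (hwr : r ≠ w) {A B C : ℝ}
    (hA : 0 < A) (hB : 0 < B) (hC : 0 < C)
    (hcomb : (A + B + C) • w = A • p + B • q + C • r) : False := by
  set S : ℝ := A + B + C with hS
  have hSpos : 0 < S := by positivity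
  have hw' : w = (A / S) • p + (B / S) • q + (C / S) • r := by
    have : w = S⁻¹ • (S • w) := by
      rw [smul_smul, inv_mul_cancel₀ (ne_of_gt hSpos), one_smul]
    rw [this, hcomb, smul_add, smul_add, smul_smul, smul_smul, smul_smul]
    rw [div_eq_inv_mul, div_eq_inv_mul, div_eq_inv_mul]
  have hBC : 0 < B + C := by positivity
  set m : Pt := (B / (B + C)) • q + (C / (B + C)) • r with hm
  have hmhull : m ∈ convexHull ℝ ({p, q, r} : Set Pt) := by
    refine (convex_convexHull ℝ _) (subset_convexHull ℝ _ (by simp)) (subset_convexHull ℝ _ (by simp)) (by positivity) (by positivity) ?_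
    field_simp
  have hwhull : w ∈ convexHull ℝ ({p, q, r} : Set Pt) := by
    have : w = (A / S) • p + ((B + C) / S) • m := by
      rw [hw', hm]
      match_scalars <;> (field_simp; try ring)
    rw [this]
    exact (convex_convexHull ℝ _) (subset_convexHull ℝ _ (by simp)) hmhull (by positivity) (by positivity) (by rw [← add_div, show A + (B + C) = S by rw [hS]; ring, div_self hSpos.ne'])
  have : w ∈ convexHull ℝ (P \ {w}) := by
    refine convexHull_mono ?_ hwhull
    rintro x (rfl | rfl | rfl) <;> exact ⟨by assumption, by simpa using (by assumption : x ≠ w)⟩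
  exact hcv w hw this

lemma insideG {P : Set Pt} (hcv : ConvexPos P) {p q r w : Pt}
    (hp : p ∈ P) (hq : q ∈ P) (hr : r ∈ P) (hw : w ∈ P)
    (hwp : p ≠ w) (hwq : q ≠ w) (hwr : r ≠ w)
    (h1 : 0 < det3 q r w * det3 p q r)
    (h2 : det3 p r w * det3 p q r < 0)
    (h3 : 0 < det3 p q w * det3 p q r) : False := by
  have hco := cocycle p q r w
  have hb := bary_identity p q r w
  rcases lt_trichotomy (det3 p q r) 0 with hΔ | hΔ | hΔ
  · refine notInTriangle hcv hp hq hr hw hwp hwq hwr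
      (A := -det3 q r w) (B := det3 p r w) (C := -det3 p q w)
      (by nlinarith) (by nlinarith) (by nlinarith) ?_
    have hsum : -det3 q r w + det3 p r w + -det3 p q w = -det3 p q r := by linarith
    rw [hsum, neg_smul, hb]
    module
  · nlinarith
  · refine notInTriangle hcv hp hq hr hw hwp hwq hwr
      (A := det3 q r w) (B := -det3 p r w) (C := det3 p q w)
      (by nlinarith) (by nlinarith) (by nlinarith) ?_
    have hsum : det3 q r w + -det3 p r w + det3 p q w = det3 p q r := by linarith
    rw [hsum, hb]
    module

lemma detne {P : Finset Pt} (hgp : GenPos ↑P) {p q r : Pt}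
    (hp : p ∈ P) (hq : q ∈ P) (hr : r ∈ P)
    (hpq : p ≠ q) (hpr : p ≠ r) (hqr : q ≠ r) : det3 p q r ≠ 0 := fun h =>
  hgp p hp q hq r hr hpq hpr hqr (collinear_of_det3 hpq h)

lemma q4 {P : Finset Pt} (hcv : ConvexPos ↑P) (hgp : GenPos ↑P) {a b c d : Pt}
    (ha : a ∈ P) (hb : b ∈ P) (hc : c ∈ P) (hd : d ∈ P)
    (hab : a ≠ b) (hac : a ≠ c) (had : a ≠ d) (hbc : b ≠ c) (hbd : b ≠ d) (hcd : c ≠ d) :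
    0 < det3 a b c * det3 a b d * det3 a c d * det3 b c d := by
  have n1 : det3 a b c ≠ 0 := detne hgp ha hb hc hab hac hbc
  have n2 : det3 a b d ≠ 0 := detne hgp ha hb hd hab had hbd
  have n3 : det3 a c d ≠ 0 := detne hgp ha hc hd hac had hcd
  have n4 : det3 b c d ≠ 0 := detne hgp hb hc hd hbc hbd hcd
  have e1 : det3 b d c = -det3 b c d := det3_swap23 _ _ _
  have e2 : det3 a d c = -det3 a c d := det3_swap23 _ _ _
  have e3 : det3 c d a = det3 a c d := det3_cyc _ _ _
  have e4 : det3 c d b = det3 b c d := det3_cyc _ _ _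
  have e5 : det3 b d a = det3 a b d := det3_cyc _ _ _
  have e6 : det3 b c a = det3 a b c := det3_cyc _ _ _
  have e7 : det3 a c b = -det3 a b c := det3_swap23 _ _ _
  have e8 : det3 a d b = -det3 a b d := det3_swap23 _ _ _
  rcases n1.lt_or_gt with s1 | s1 <;> rcases n2.lt_or_gt with s2 | s2 <;>
    rcases n3.lt_or_gt with s3 | s3 <;> rcases n4.lt_or_gt with s4 | s4
  -- (−,−,−,−)
  · nlinarith [mul_pos_of_neg_of_neg s1 s2, mul_pos_of_neg_of_neg s3 s4]
  -- (−,−,−,+) : c inside a b d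
  · exact absurd (insideG hcv ha hb hd hc hac hbc hcd.symm
      (by rw [e1]; nlinarith) (by rw [e2]; nlinarith) (by nlinarith)) (by simp)
  -- (−,−,+,−) : d inside a b c
  · exact absurd (insideG hcv ha hb hc hd had hbd hcd
      (by nlinarith) (by nlinarith) (by nlinarith)) (by simp)
  -- (−,−,+,+)
  · nlinarith [mul_pos_of_neg_of_neg s1 s2, mul_pos s3 s4]
  -- (−,+,−,−) : a inside b c d
  · exact absurd (insideG hcv hb hc hd ha hab.symm hac.symm had.symm
      (by rw [e3]; nlinarith) (by rw [e5]; nlinarith) (by rw [e6]; nlinarith)) (by simp)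
  -- (−,+,−,+)
  · nlinarith [mul_neg_of_neg_of_pos s1 s2, mul_neg_of_neg_of_pos s3 s4]
  -- (−,+,+,−)
  · nlinarith [mul_neg_of_neg_of_pos s1 s2, mul_neg_of_pos_of_neg s3 s4]
  -- (−,+,+,+) : b inside a c d
  · exact absurd (insideG hcv ha hc hd hb hab hbc.symm hbd.symm
      (by rw [e4]; nlinarith) (by rw [e8]; nlinarith) (by rw [e7]; nlinarith)) (by simp)
  -- (+,−,−,−) : b inside a c d
  · exact absurd (insideG hcv ha hc hd hb hab hbc.symm hbd.symm
      (by rw [e4]; nlinarith) (by rw [e8]; nlinarith) (by rw [e7]; nlinarith)) (by simp)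
  -- (+,−,−,+)
  · nlinarith [mul_neg_of_pos_of_neg s1 s2, mul_neg_of_neg_of_pos s3 s4]
  -- (+,−,+,−)
  · nlinarith [mul_neg_of_pos_of_neg s1 s2, mul_neg_of_pos_of_neg s3 s4]
  -- (+,−,+,+) : a inside b c d
  · exact absurd (insideG hcv hb hc hd ha hab.symm hac.symm had.symm
      (by rw [e3]; nlinarith) (by rw [e5]; nlinarith) (by rw [e6]; nlinarith)) (by simp)
  -- (+,+,−,−)
  · nlinarith [mul_pos s1 s2, mul_pos_of_neg_of_neg s3 s4]
  -- (+,+,−,+) : d inside a b c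
  · exact absurd (insideG hcv ha hb hc hd had hbd hcd
      (by nlinarith) (by nlinarith) (by nlinarith)) (by simp)
  -- (+,+,+,−) : c inside a b d
  · exact absurd (insideG hcv ha hb hd hc hac hbc hcd.symm
      (by rw [e1]; nlinarith) (by rw [e2]; nlinarith) (by nlinarith)) (by simp)
  -- (+,+,+,+)
  · nlinarith [mul_pos s1 s2, mul_pos s3 s4]

lemma alpha {P : Finset Pt} (hcv : ConvexPos ↑P) (hgp : GenPos ↑P) {a b s x : Pt}
    (ha : a ∈ P) (hb : b ∈ P) (hs : s ∈ P) (hx : x ∈ P)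
    (hab : a ≠ b) (has : a ≠ s) (hax : a ≠ x) (hbs : b ≠ s) (hbx : b ≠ x) (hsx : s ≠ x)
    (h1 : det3 a b s < 0) (h2 : det3 a s x < 0) (h3 : 0 < det3 a b x) : False := by
  have hq := q4 hcv hgp ha hb hs hx hab has hax hbs hbx hsx
  have hco := cocycle a b s x
  have hpos : 0 < det3 a b s * det3 a b x * det3 a s x :=
    mul_pos_of_neg_of_neg (mul_neg_of_neg_of_pos h1 h3) h2
  have hbsx : 0 < det3 b s x := by nlinarith [hq, hpos]
  linarith

lemma gptrans {a b s x y : Pt}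
    (h1 : det3 a b s < 0) (h2 : det3 a b x < 0) (h3 : det3 a b y < 0)
    (h4 : det3 a s x < 0) (h5 : det3 a x y < 0) : det3 a s y < 0 := by
  have hid := gp_identity a b s x y
  nlinarith [mul_pos_of_neg_of_neg h1 h5, mul_pos_of_neg_of_neg h3 h4]


/-- Every perfect matching on `n ≥ 4` points in convex (and general)
position can be transformed, by at most one flip, into a perfect matching containing a
boundary edge. -/
theorem stmt9 (n : ℕ) (hn : Even n) (h4 : 4 ≤ n) (P : Finset Pt) (hcard : P.card = n)
    (hgp : GenPos ↑P) (hcv : ConvexPos ↑P)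
    (M : Set (Sym2 Pt)) (hM : IsPM P M) :
    ∃ M' : Set (Sym2 Pt), (M' = M ∨ Flip M M') ∧
      ∃ p q : Pt, s(p, q) ∈ M' ∧ BoundaryEdge ↑P p q := by
  classical
  obtain ⟨hdiag, hmem, huniq⟩ := hM
  set Neg : Pt → Pt → Finset Pt := fun u v => P.filter (fun x => det3 u v x < 0) with hNeg
  have hNegmem : ∀ u v x : Pt, x ∈ Neg u v ↔ x ∈ P ∧ det3 u v x < 0 := by
    intro u v x; simp [hNeg]
  set F : Finset (Pt × Pt) := (P ×ˢ P).filter (fun z => s(z.1, z.2) ∈ M) with hF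
  have hFmem : ∀ z : Pt × Pt, z ∈ F ↔ z.1 ∈ P ∧ z.2 ∈ P ∧ s(z.1, z.2) ∈ M := by
    intro z; simp [hF, Finset.mem_product, and_assoc]
  have hPne : P.Nonempty := by
    rw [← Finset.card_pos, hcard]; omega
  have hFne : F.Nonempty := by
    obtain ⟨p, hp⟩ := hPne
    obtain ⟨e, ⟨heM, hpe⟩, -⟩ := huniq p hp
    obtain ⟨y, rfl⟩ := Sym2.mem_iff_exists.1 hpe
    exact ⟨(p, y), (hFmem _).2 ⟨hp, hmem _ heM y (Sym2.mem_iff.2 (Or.inr rfl)), heM⟩⟩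
  obtain ⟨⟨a, b⟩, habF, hminF⟩ := F.exists_min_image (fun z => (Neg z.1 z.2).card) hFne
  obtain ⟨haP, hbP, habM⟩ := (hFmem _).1 habF
  dsimp only at haP hbP habM hminF
  have hab : a ≠ b := fun h => hdiag _ habM (Sym2.mk_isDiag_iff.2 h)
  have hdet : ∀ u v x : Pt, u ∈ P → v ∈ P → x ∈ P → u ≠ v → u ≠ x → v ≠ x → det3 u v x ≠ 0 :=
    fun u v x hu hv hx h1 h2 h3 => detne hgp hu hv hx h1 h2 h3
  by_cases hS : (Neg a b) = ∅
  · -- {a,b} is already a boundary edge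
    have hpos : ∀ y : Pt, y ∈ P → y ≠ a → y ≠ b → 0 < det3 a b y := by
      intro y hyP hya hyb
      rcases (hdet a b y haP hbP hyP hab hya.symm hyb.symm).lt_or_gt with h | h
      · exact absurd ((hNegmem a b y).2 ⟨hyP, h⟩) (by simp [hS])
      · exact h
    refine ⟨M, Or.inl rfl, a, b, habM, hab, ?_⟩
    intro x hx y hy
    simp only [Set.mem_diff, Set.mem_insert_iff, Set.mem_singleton_iff, Finset.mem_coe,
      not_or] at hx hy
    exact ssameside_of_det3 hab (hpos x hx.1 hx.2.1 hx.2.2) (hpos y hy.1 hy.2.1 hy.2.2)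
  · have hSne : (Neg a b).Nonempty := Finset.nonempty_iff_ne_empty.2 hS
    obtain ⟨s0, hs0S, hsmin⟩ := (Neg a b).exists_min_image (fun z => (Neg a z).card) hSne
    obtain ⟨hs0P, hs0neg⟩ := (hNegmem a b s0).1 hs0S
    have hsa : s0 ≠ a := by
      intro h; rw [h, det3_self_mid] at hs0neg; exact absurd hs0neg (lt_irrefl 0)
    have hsb : s0 ≠ b := by
      intro h; rw [h, det3_self_right] at hs0neg; exact absurd hs0neg (lt_irrefl 0)
    -- gift wrapping : Neg a s0 is empty
    have hT : Neg a s0 = ∅ := by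
      by_contra hTne
      obtain ⟨x, hxT⟩ := Finset.nonempty_iff_ne_empty.2 hTne
      obtain ⟨hxP, hxneg⟩ := (hNegmem a s0 x).1 hxT
      have hxa : x ≠ a := by
        intro h; rw [h, det3_self_mid] at hxneg; exact absurd hxneg (lt_irrefl 0)
      have hxs : x ≠ s0 := by
        intro h; rw [h, det3_self_right] at hxneg; exact absurd hxneg (lt_irrefl 0)
      have hxb : x ≠ b := by
        intro h; rw [h, det3_swap23] at hxneg; linarith
      have hxab : det3 a b x < 0 := by
        rcases (hdet a b x haP hbP hxP hab hxa.symm hxb.symm).lt_or_gt with h | h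
        · exact h
        · exact absurd (alpha hcv hgp haP hbP hs0P hxP hab hsa.symm hxa.symm hsb.symm
            hxb.symm hxs.symm hs0neg hxneg h) (by simp)
      have hxS : x ∈ Neg a b := (hNegmem _ _ _).2 ⟨hxP, hxab⟩
      have hsub : Neg a x ⊆ (Neg a s0).erase x := by
        intro y hyT
        obtain ⟨hyP, hyneg⟩ := (hNegmem a x y).1 hyT
        have hya : y ≠ a := by
          intro h; rw [h, det3_self_mid] at hyneg; exact absurd hyneg (lt_irrefl 0)
        have hyx : y ≠ x := by
          intro h; rw [h, det3_self_right] at hyneg; exact absurd hyneg (lt_irrefl 0)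
        have hyb : y ≠ b := by
          intro h; rw [h, det3_swap23] at hyneg; linarith
        have hys : y ≠ s0 := by
          intro h; rw [h, det3_swap23] at hyneg; linarith
        have hyab : det3 a b y < 0 := by
          rcases (hdet a b y haP hbP hyP hab hya.symm hyb.symm).lt_or_gt with h | h
          · exact h
          · exact absurd (alpha hcv hgp haP hbP hxP hyP hab hxa.symm hya.symm hxb.symm
              hyb.symm hyx.symm hxab hyneg h) (by simp)
        have hyas : det3 a s0 y < 0 := gptrans hs0neg hxab hyab hxneg hyneg
        exact Finset.mem_erase.2 ⟨hyx, (hNegmem _ _ _).2 ⟨hyP, hyas⟩⟩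
      have hcard2 : (Neg a x).card < (Neg a s0).card :=
        lt_of_le_of_lt (Finset.card_le_card hsub) (Finset.card_erase_lt_of_mem hxT)
      exact absurd (hsmin x hxS) (by omega)
    -- {a, s0} is a boundary edge
    have hbdpos : ∀ y : Pt, y ∈ P → y ≠ a → y ≠ s0 → 0 < det3 a s0 y := by
      intro y hyP hya hys
      rcases (hdet a s0 y haP hs0P hyP hsa.symm hya.symm hys.symm).lt_or_gt with h | h
      · exact absurd ((hNegmem _ _ _).2 ⟨hyP, h⟩) (by simp [hT])
      · exact h
    have hbdEdge : BoundaryEdge ↑P a s0 := by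
      refine ⟨hsa.symm, ?_⟩
      intro x hx y hy
      simp only [Set.mem_diff, Set.mem_insert_iff, Set.mem_singleton_iff, Finset.mem_coe,
        not_or] at hx hy
      exact ssameside_of_det3 hsa.symm (hbdpos x hx.1 hx.2.1 hx.2.2)
        (hbdpos y hy.1 hy.2.1 hy.2.2)
    -- the matching edge at s0
    obtain ⟨e, ⟨heM, hse⟩, -⟩ := huniq s0 hs0P
    obtain ⟨t, rfl⟩ := Sym2.mem_iff_exists.1 hse
    have hst : s0 ≠ t := fun h => hdiag _ heM (Sym2.mk_isDiag_iff.2 h)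
    have htP : t ∈ P := hmem _ heM t (Sym2.mem_iff.2 (Or.inr rfl))
    have hta : t ≠ a := by
      intro h
      rw [h] at heM
      obtain ⟨ea, -, hequ⟩ := huniq a haP
      have h1 : s(a, b) = ea := hequ _ ⟨habM, Sym2.mem_iff.2 (Or.inl rfl)⟩
      have h2 : s(s0, a) = ea := hequ _ ⟨heM, Sym2.mem_iff.2 (Or.inr rfl)⟩
      rw [← h1] at h2
      have : s0 ∈ s(a, b) := by rw [← h2]; exact Sym2.mem_iff.2 (Or.inl rfl)
      rcases Sym2.mem_iff.1 this with h' | h'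
      · exact hsa h'
      · exact hsb h'
    have htb : t ≠ b := by
      intro h
      rw [h] at heM
      obtain ⟨eb, -, hequ⟩ := huniq b hbP
      have h1 : s(a, b) = eb := hequ _ ⟨habM, Sym2.mem_iff.2 (Or.inr rfl)⟩
      have h2 : s(s0, b) = eb := hequ _ ⟨heM, Sym2.mem_iff.2 (Or.inr rfl)⟩
      rw [← h1] at h2
      have : s0 ∈ s(a, b) := by rw [← h2]; exact Sym2.mem_iff.2 (Or.inl rfl)
      rcases Sym2.mem_iff.1 this with h' | h'
      · exact hsa h'
      · exact hsb h'
    -- key sign computations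
    have hq := q4 hcv hgp haP hbP hs0P htP hab hsa.symm hta.symm hsb.symm htb.symm hst
    have htpos : 0 < det3 a b t := by
      rcases (hdet a b t haP hbP htP hab hta.symm htb.symm).lt_or_gt with hneg | h
      · exfalso
        have hi : 0 < det3 a s0 t * det3 b s0 t := by
          nlinarith [hq, mul_pos_of_neg_of_neg hs0neg hneg]
        have hii : ∀ y : Pt, y ∈ P → y ≠ a → y ≠ b → y ≠ s0 → y ≠ t → 0 < det3 a b y →
            0 < det3 s0 t y * det3 a s0 t := by
          intro y hyP hya hyb hys hyt hypos
          have h1 : 0 < det3 a s0 y := by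
            rcases (hdet a s0 y haP hs0P hyP hsa.symm hya.symm hys.symm).lt_or_gt with h' | h'
            · exact absurd (alpha hcv hgp haP hbP hs0P hyP hab hsa.symm hya.symm hsb.symm
                hyb.symm hys.symm hs0neg h' hypos) (by simp)
            · exact h'
          have h2 : 0 < det3 a t y := by
            rcases (hdet a t y haP htP hyP hta.symm hya.symm hyt.symm).lt_or_gt with h' | h'
            · exact absurd (alpha hcv hgp haP hbP htP hyP hab hta.symm hya.symm htb.symm
                hyb.symm hyt.symm hneg h' hypos) (by simp)
            · exact h'
          have hq2 := q4 hcv hgp haP hs0P htP hyP hsa.symm hta.symm hya.symm hst hys.symm hyt.symm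
          nlinarith [hq2, mul_pos h1 h2]
        have e1 : det3 s0 t a = det3 a s0 t := det3_cyc _ _ _
        have e2 : det3 s0 t b = det3 b s0 t := det3_cyc _ _ _
        rcases (hdet a s0 t haP hs0P htP hsa.symm hta.symm hst).lt_or_gt with hneg2 | hpos2
        · -- a (and b) on the positive side of (t, s0); minimal side of (t,s0) is smaller
          have hFts : (t, s0) ∈ F := (hFmem _).2 ⟨htP, hs0P, by rw [Sym2.eq_swap]; exact heM⟩
          have hbneg : det3 b s0 t < 0 := by nlinarith
          have hsub : Neg t s0 ⊆ Neg a b := by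
            intro y hy
            obtain ⟨hyP, hyneg⟩ := (hNegmem _ _ _).1 hy
            rw [det3_swap12] at hyneg
            have hyspos : 0 < det3 s0 t y := by linarith
            have hyt : y ≠ t := by
              intro h; rw [h, det3_self_right] at hyspos; exact absurd hyspos (lt_irrefl 0)
            have hys : y ≠ s0 := by
              intro h; rw [h, det3_self_mid] at hyspos; exact absurd hyspos (lt_irrefl 0)
            have hya : y ≠ a := by
              intro h; rw [h, e1] at hyspos; linarith
            have hyb : y ≠ b := by
              intro h; rw [h, e2] at hyspos; linarith
            refine (hNegmem _ _ _).2 ⟨hyP, ?_⟩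
            rcases (hdet a b y haP hbP hyP hab hya.symm hyb.symm).lt_or_gt with h' | h'
            · exact h'
            · have := hii y hyP hya hyb hys hyt h'
              nlinarith
          have hs0not : s0 ∉ Neg t s0 := by
            intro h
            obtain ⟨-, h'⟩ := (hNegmem _ _ _).1 h
            rw [det3_self_right] at h'
            exact absurd h' (lt_irrefl 0)
          have hlt : (Neg t s0).card < (Neg a b).card :=
            Finset.card_lt_card ((Finset.ssubset_iff_of_subset hsub).2 ⟨s0, hs0S, hs0not⟩)
          have hmm := hminF (t, s0) hFts
          dsimp only at hmm
          omega
        · have hFst : (s0, t) ∈ F := (hFmem _).2 ⟨hs0P, htP, heM⟩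
          have hbpos : 0 < det3 b s0 t := by nlinarith
          have hsub : Neg s0 t ⊆ Neg a b := by
            intro y hy
            obtain ⟨hyP, hyneg⟩ := (hNegmem _ _ _).1 hy
            have hyt : y ≠ t := by
              intro h; rw [h, det3_self_right] at hyneg; exact absurd hyneg (lt_irrefl 0)
            have hys : y ≠ s0 := by
              intro h; rw [h, det3_self_mid] at hyneg; exact absurd hyneg (lt_irrefl 0)
            have hya : y ≠ a := by
              intro h; rw [h, e1] at hyneg; linarith
            have hyb : y ≠ b := by
              intro h; rw [h, e2] at hyneg; linarith
            refine (hNegmem _ _ _).2 ⟨hyP, ?_⟩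
            rcases (hdet a b y haP hbP hyP hab hya.symm hyb.symm).lt_or_gt with h' | h'
            · exact h'
            · have := hii y hyP hya hyb hys hyt h'
              nlinarith
          have hs0not : s0 ∉ Neg s0 t := by
            intro h
            obtain ⟨-, h'⟩ := (hNegmem _ _ _).1 h
            rw [det3_self_mid] at h'
            exact absurd h' (lt_irrefl 0)
          have hlt : (Neg s0 t).card < (Neg a b).card :=
            Finset.card_lt_card ((Finset.ssubset_iff_of_subset hsub).2 ⟨s0, hs0S, hs0not⟩)
          have hmm := hminF (s0, t) hFst
          dsimp only at hmm
          omega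
      · exact h
    -- the two edges cross, flip them
    have hcross : SegCross a b s0 t := by
      apply segcross_of_det3 (mul_neg_of_neg_of_pos hs0neg htpos) ?_ hab hsa.symm hta.symm
        hsb.symm htb.symm hst
      have e1 : det3 s0 t a = det3 a s0 t := det3_cyc _ _ _
      have e2 : det3 s0 t b = det3 b s0 t := det3_cyc _ _ _
      rw [e1, e2]
      nlinarith [hq, mul_neg_of_neg_of_pos hs0neg htpos]
    refine ⟨(M \ {s(a, b), s(s0, t)}) ∪ {s(a, s0), s(b, t)},
      Or.inr ⟨a, b, s0, t, habM, heM, hcross, Or.inl rfl⟩, a, s0, ?_, hbdEdge⟩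
    exact Set.mem_union_right _ (Set.mem_insert _ _)
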